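/- For every real number x > 0, the Grünwald–Letnikov half-derivative of f(x) = x evaluated along the coupled limit h = x/N converges to the Riemann–Liouville value: lim_{N→∞} (x/N)^{-1/2} ∑_{k=0}^{N} (-1)^k C(1/2, k) (x - k·x/N) = (2/√π) √x. -/

import Mathlib

open Finset Filter Real Topology

/-- Generalized binomial coefficient C(R,k) = R(R-1)⋯(R-k+1)/k! for real R and natural k. -/
noncomputable def genBinom (R : ℝ) (k : ℕ) : ℝ :=
  (∏ i ∈ Finset.range k, (R - i)) / (Nat.factorial k)

/-- Normalized central binomial coefficient. -/
noncomputable def cB (n : ℕ) : ℝ := (Nat.centralBinom n) / 4 ^ n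

lemma cB_zero : cB 0 = 1 := by simp [cB, Nat.centralBinom]

lemma cB_succ (n : ℕ) : cB (n + 1) = cB n * (2 * n + 1) / (2 * n + 2) := by
  have h : ((n:ℝ) + 1) * (Nat.centralBinom (n+1) : ℝ)
      = 2 * (2 * (n:ℝ) + 1) * (Nat.centralBinom n : ℝ) := by
    exact_mod_cast congrArg (Nat.cast : ℕ → ℝ) (Nat.succ_mul_centralBinom_succ n)
  have h4 : (4:ℝ) ^ n ≠ 0 := by positivity
  have hn1 : (n:ℝ) + 1 ≠ 0 := by positivity
  unfold cB
  rw [pow_succ]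
  field_simp
  linear_combination 2 * h

lemma genBinom_succ (R : ℝ) (k : ℕ) :
    genBinom R (k + 1) = genBinom R k * (R - k) / (k + 1) := by
  unfold genBinom
  rw [Finset.prod_range_succ, Nat.factorial_succ, Nat.cast_mul, Nat.cast_succ]
  rw [div_mul_eq_mul_div, div_div]
  ring

lemma genBinom_half (k : ℕ) :
    genBinom (1/2) (k+1) = (-1:ℝ)^k * cB k / (2*(k+1)) := by
  induction k with
  | zero => simp [genBinom_succ, genBinom, cB_zero]
  | succ k ih =>
    have hk1 : ((k:ℝ) + 1) ≠ 0 := by positivity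
    have hk2 : ((k:ℝ) + 2) ≠ 0 := by positivity
    rw [genBinom_succ, ih, cB_succ, pow_succ]
    push_cast
    field_simp
    ring

lemma g_succ (k : ℕ) :
    (-1:ℝ) ^ (k+1) * genBinom (1/2) (k+1) = -(cB k) / (2 * (k + 1)) := by
  rw [genBinom_half, pow_succ]
  have h : ((-1:ℝ)^k) * ((-1:ℝ)^k) = 1 := by
    rw [← pow_add]
    exact Even.neg_one_pow ⟨k, by ring⟩
  have hk1 : ((k:ℝ) + 1) ≠ 0 := by positivity
  field_simp
  linear_combination (-(cB k)) * h

lemma sumA (N : ℕ) :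
    ∑ k ∈ Finset.range (N + 1), (-1:ℝ) ^ k * genBinom (1/2) k = cB N := by
  induction N with
  | zero => simp [genBinom, cB_zero]
  | succ N ih =>
    rw [Finset.sum_range_succ, ih, g_succ, cB_succ]
    have h1 : ((N:ℝ) + 1) ≠ 0 := by positivity
    field_simp
    ring

lemma sumB (N : ℕ) :
    ∑ k ∈ Finset.range (N + 1), (-1:ℝ) ^ k * genBinom (1/2) k * k = -(N) * cB N := by
  induction N with
  | zero => simp
  | succ N ih =>
    rw [Finset.sum_range_succ, ih, g_succ, cB_succ]
    have h1 : ((N:ℝ) + 1) ≠ 0 := by positivity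
    push_cast
    field_simp
    ring

lemma sqrt_mul_cB (n : ℕ) (hn : 1 ≤ n) :
    Real.sqrt n * cB n = Stirling.stirlingSeq (2 * n) / (Stirling.stirlingSeq n) ^ 2 := by
  have hnR : (0:ℝ) < n := by exact_mod_cast hn
  have hE : (0:ℝ) < Real.exp 1 := Real.exp_pos 1
  have hfac : (((2*n).factorial : ℕ) : ℝ)
      = (Nat.centralBinom n : ℝ) * ((n.factorial : ℝ))^2 := by
    have h := Nat.choose_mul_factorial_mul_factorial (show n ≤ 2*n by omega)
    have h2 : (2*n - n) = n := by omega
    rw [h2] at h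
    have := congrArg (Nat.cast : ℕ → ℝ) h
    push_cast at this
    rw [Nat.centralBinom]
    nlinarith [this]
  have h2n : ((2*n : ℕ) : ℝ) = 2 * (n:ℝ) := by push_cast; ring
  have hsq4 : Real.sqrt (2 * (2 * (n:ℝ))) = 2 * Real.sqrt n := by
    rw [show (2:ℝ) * (2 * n) = 4 * n by ring, Real.sqrt_mul (by norm_num : (0:ℝ) ≤ 4),
      show (4:ℝ) = 2^2 by norm_num, Real.sqrt_sq (by norm_num : (0:ℝ) ≤ 2)]
  have hpow : ((2 * (n:ℝ)) / Real.exp 1) ^ (2*n)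
      = 4 ^ n * ((n:ℝ) / Real.exp 1) ^ (2*n) := by
    rw [mul_div_assoc, mul_pow, pow_mul]; norm_num
  have hsq : (Stirling.stirlingSeq n)^2
      = ((n.factorial : ℕ) : ℝ)^2 / ((2*(n:ℝ)) * ((n:ℝ)/Real.exp 1)^(2*n)) := by
    unfold Stirling.stirlingSeq
    rw [div_pow, mul_pow, Real.sq_sqrt (by positivity : (0:ℝ) ≤ 2 * (n:ℝ)), ← pow_mul,
      mul_comm n 2]
  have h2s : Stirling.stirlingSeq (2*n)
      = ((Nat.centralBinom n : ℝ) * ((n.factorial : ℕ) : ℝ)^2)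
        / ((2 * Real.sqrt n) * (4 ^ n * ((n:ℝ)/Real.exp 1)^(2*n))) := by
    unfold Stirling.stirlingSeq
    rw [hfac, h2n, hsq4, hpow]
  rw [h2s, hsq]
  have hss : Real.sqrt (n:ℝ) * Real.sqrt n = (n:ℝ) := Real.mul_self_sqrt hnR.le
  have h2 : ((n:ℝ)/Real.exp 1) ^ (2*n) ≠ 0 := by positivity
  have h3 : Real.sqrt (n:ℝ) ≠ 0 := by positivity
  have h4 : (Nat.factorial n : ℝ) ≠ 0 := by positivity
  have h5 : (4:ℝ)^n ≠ 0 := by positivity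
  unfold cB
  field_simp
  linear_combination (Nat.centralBinom n : ℝ) * hss

lemma tendsto_sqrt_cB :
    Tendsto (fun n : ℕ => Real.sqrt n * cB n) atTop (nhds (1 / Real.sqrt π)) := by
  have hπ : Real.sqrt π ≠ 0 := by positivity
  have hcomp : Tendsto (fun n : ℕ => 2 * n) atTop atTop := by
    apply tendsto_atTop_atTop_of_monotone
    · intro a b h; dsimp only; omega
    · intro b; exact ⟨b, by omega⟩
  have h1 : Tendsto (fun n : ℕ => Stirling.stirlingSeq (2*n) / (Stirling.stirlingSeq n)^2)
      atTop (𝓝 (Real.sqrt π / (Real.sqrt π)^2)) :=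
    (Stirling.tendsto_stirlingSeq_sqrt_pi.comp hcomp).div
      (Stirling.tendsto_stirlingSeq_sqrt_pi.pow 2) (by positivity)
  have heq : Real.sqrt π / (Real.sqrt π)^2 = 1 / Real.sqrt π := by
    rw [sq]; field_simp
  rw [← heq]
  refine h1.congr' ?_
  filter_upwards [eventually_ge_atTop 1] with n hn
  exact (sqrt_mul_cB n hn).symm

/-- The Grünwald–Letnikov half-derivative of f(x) = x along the coupled limit h = x/N
    converges to the Riemann–Liouville value (2/√π)√x, for x > 0. -/
theorem half_derivative_linear_principal_value (x : ℝ) (hx : 0 < x) :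
    Filter.Tendsto
      (fun N : ℕ =>
        (x / N) ^ (-(1/2) : ℝ) *
          ∑ k ∈ Finset.range (N + 1),
            (-1 : ℝ) ^ k * genBinom (1/2) k * (x - k * (x / N)))
      Filter.atTop (nhds (2 / Real.sqrt Real.pi * Real.sqrt x)) := by
  have hsx : Real.sqrt x ≠ 0 := by positivity
  have htarget : 2 / Real.sqrt π * Real.sqrt x = (2 * Real.sqrt x) * (1 / Real.sqrt π) := by
    ring
  rw [htarget]
  have hlim := tendsto_sqrt_cB.const_mul (2 * Real.sqrt x)
  refine hlim.congr' ?_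
  filter_upwards [eventually_ge_atTop 1] with N hN
  have hNR : (0:ℝ) < N := by exact_mod_cast hN
  have hxN : (0:ℝ) < x / N := div_pos hx hNR
  have hsum : ∑ k ∈ Finset.range (N + 1),
      (-1 : ℝ) ^ k * genBinom (1/2) k * (x - k * (x / N)) = 2 * x * cB N := by
    have hterm : ∀ k ∈ Finset.range (N+1),
        (-1 : ℝ) ^ k * genBinom (1/2) k * (x - k * (x / N))
        = x * ((-1:ℝ)^k * genBinom (1/2) k) - (x/N) * ((-1:ℝ)^k * genBinom (1/2) k * k) := by
      intro k _; ring
    rw [Finset.sum_congr rfl hterm, Finset.sum_sub_distrib, ← Finset.mul_sum, ← Finset.mul_sum,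
      sumA, sumB]
    field_simp
    ring
  have hrpow : (x / N) ^ (-(1/2) : ℝ) = Real.sqrt N / Real.sqrt x := by
    rw [Real.rpow_neg hxN.le, ← Real.sqrt_eq_rpow, Real.sqrt_div hx.le, inv_div]
  have hxx : Real.sqrt x * Real.sqrt x = x := Real.mul_self_sqrt hx.le
  rw [hsum, hrpow]
  rw [div_mul_eq_mul_div, eq_div_iff hsx]
  linear_combination (2 * Real.sqrt N * cB N) * hxx
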